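/- arXiv:2110.08824 — 5 statements merged into one kernel-verified Lean document; each statement's English description precedes it below -/
import Mathlib

section
/- If β > 0, γ > 0, q ∈ (0,1), and the minimum degree k_min of the graph satisfies βγ⁻¹ > 1/(q²k_min), then for all t ≥ 0, e^{qβAt}(βA − (γ/q)I)u ⪯ e^{(p/q)γt}·e^{βAt}(βA − γI)u componentwise, where p = 1 − q. -/
open Matrix NormedSpace

lemma hasSum_exp_mulVec {n : ℕ} (M : Matrix (Fin n) (Fin n) ℝ) (x : Fin n → ℝ) (i : Fin n) :
    HasSum (fun k : ℕ => ((Nat.factorial k : ℝ))⁻¹ • ((M ^ k) *ᵥ x) i) ((NormedSpace.exp M *ᵥ x) i) := by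
  letI : SeminormedRing (Matrix (Fin n) (Fin n) ℝ) := Matrix.linftyOpSemiNormedRing
  letI : NormedRing (Matrix (Fin n) (Fin n) ℝ) := Matrix.linftyOpNormedRing
  letI : NormedAlgebra ℝ (Matrix (Fin n) (Fin n) ℝ) := Matrix.linftyOpNormedAlgebra
  have h := NormedSpace.exp_series_hasSum_exp' (𝕂 := ℝ) M
  let L : Matrix (Fin n) (Fin n) ℝ →ₗ[ℝ] ℝ :=
    { toFun := fun N => (N *ᵥ x) i
      map_add' := by intro N N'; simp [Matrix.add_mulVec]
      map_smul' := by intro c N; simp [Matrix.smul_mulVec] }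
  have hL : Continuous L := L.continuous_of_finiteDimensional
  have h2 := h.mapL ⟨L, hL⟩
  simp [L, Matrix.smul_mulVec] at h2 ⊢
  exact h2

theorem exp_bound_componentwise (n : ℕ) (G : SimpleGraph (Fin n)) [DecidableRel G.Adj]
    (hconn : G.Connected) (kmin : ℕ) (hkpos : 0 < kmin)
    (hkmin : ∀ i, kmin ≤ G.degree i)
    (A : Matrix (Fin n) (Fin n) ℝ) (hA : A = G.adjMatrix ℝ)
    (β γ p q : ℝ) (hβ : 0 < β) (hγ : 0 < γ) (hp : p ∈ Set.Ioo (0:ℝ) 1) (hq : q = 1 - p)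
    (hthr : β / γ > 1 / (q ^ 2 * kmin))
    (u : Fin n → ℝ) (hu : u = fun _ => 1) :
    ∀ t : ℝ, 0 ≤ t → ∀ i : Fin n,
      (NormedSpace.exp (t • ((q * β) • A)) *ᵥ ((β • A - (γ / q) • (1 : Matrix (Fin n) (Fin n) ℝ)) *ᵥ u)) i ≤
      Real.exp ((p / q) * γ * t) *
        (NormedSpace.exp (t • (β • A)) *ᵥ ((β • A - γ • (1 : Matrix (Fin n) (Fin n) ℝ)) *ᵥ u)) i := by
  obtain ⟨hp0, hp1⟩ := hp
  have hq0 : 0 < q := by rw [hq]; linarith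
  have hq1 : q < 1 := by rw [hq]; linarith
  -- basic facts
  have hA0 : ∀ i j, 0 ≤ A i j := by
    intro i j; rw [hA]; simp [SimpleGraph.adjMatrix]; positivity
  have hApow : ∀ (k : ℕ) (i j : Fin n), 0 ≤ (A ^ k) i j := by
    intro k
    induction k with
    | zero => intro i j; simp [Matrix.one_apply]; positivity
    | succ m ih =>
      intro i j
      rw [pow_succ, Matrix.mul_apply]
      exact Finset.sum_nonneg fun l _ => mul_nonneg (ih i l) (hA0 l j)
  -- threshold consequences
  have hk1 : (1:ℝ) ≤ (kmin : ℝ) := by exact_mod_cast hkpos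
  have hγq : γ < β * q ^ 2 * kmin := by
    have hpos : (0:ℝ) < q ^ 2 * kmin := by positivity
    rw [gt_iff_lt, div_lt_div_iff₀ hpos (by positivity), one_mul] at hthr
    linarith
  have hdeg : ∀ j : Fin n, (kmin : ℝ) ≤ (G.degree j : ℝ) := by
    intro j; exact_mod_cast hkmin j
  set v : Fin n → ℝ := (β • A - (γ / q) • (1 : Matrix (Fin n) (Fin n) ℝ)) *ᵥ u with hv
  set w : Fin n → ℝ := (β • A - γ • (1 : Matrix (Fin n) (Fin n) ℝ)) *ᵥ u with hw
  have hAu : ∀ j : Fin n, (A *ᵥ u) j = (G.degree j : ℝ) := by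
    intro j
    rw [hA, hu]
    simpa using (SimpleGraph.adjMatrix_mulVec_const_apply (α := ℝ) (G := G) (a := 1) (v := j))
  have hvval : ∀ j, v j = β * (G.degree j : ℝ) - γ / q := by
    intro j
    rw [hv, Matrix.sub_mulVec, Matrix.smul_mulVec, Matrix.smul_mulVec,
      Matrix.one_mulVec]
    have h1 := hAu j
    rw [hu] at h1 ⊢
    simp only [Pi.sub_apply, Pi.smul_apply, smul_eq_mul, h1]
    ring
  have hwval : ∀ j, w j = β * (G.degree j : ℝ) - γ := by
    intro j
    rw [hw, Matrix.sub_mulVec, Matrix.smul_mulVec, Matrix.smul_mulVec,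
      Matrix.one_mulVec]
    have h1 := hAu j
    rw [hu] at h1 ⊢
    simp only [Pi.sub_apply, Pi.smul_apply, smul_eq_mul, h1]
    ring
  have hv0 : ∀ j, 0 ≤ v j := by
    intro j
    rw [hvval j]
    have h1 : γ / q ≤ γ / q ^ 2 := by
      apply div_le_div_of_nonneg_left hγ.le (by positivity)
      nlinarith
    have h2 : γ / q ^ 2 ≤ β * kmin := by
      rw [div_le_iff₀ (by positivity)]; nlinarith
    have h3 : β * (kmin:ℝ) ≤ β * (G.degree j : ℝ) := by
      exact mul_le_mul_of_nonneg_left (hdeg j) hβ.le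
    linarith
  have hvw : ∀ j, v j ≤ w j := by
    intro j
    rw [hvval j, hwval j]
    have : γ ≤ γ / q := by
      rw [le_div_iff₀ hq0]; nlinarith
    linarith
  have hw0 : ∀ j, 0 ≤ w j := fun j => le_trans (hv0 j) (hvw j)
  -- vector power facts
  have hpowv : ∀ (k : ℕ) (j : Fin n), 0 ≤ ((A ^ k) *ᵥ v) j := by
    intro k j
    rw [Matrix.mulVec]
    exact Finset.sum_nonneg fun l _ => mul_nonneg (hApow k j l) (hv0 l)
  have hpowvw : ∀ (k : ℕ) (j : Fin n), ((A ^ k) *ᵥ v) j ≤ ((A ^ k) *ᵥ w) j := by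
    intro k j
    rw [Matrix.mulVec, Matrix.mulVec]
    exact Finset.sum_le_sum fun l _ =>
      mul_le_mul_of_nonneg_left (hvw l) (hApow k j l)
  have hpoww : ∀ (k : ℕ) (j : Fin n), 0 ≤ ((A ^ k) *ᵥ w) j :=
    fun k j => le_trans (hpowv k j) (hpowvw k j)
  intro t ht i
  -- rewrite the scaled matrices
  have e1 : t • ((q * β) • A) = (t * (q * β)) • A := by rw [smul_smul]
  have e2 : t • (β • A) = (t * β) • A := by rw [smul_smul]
  have h1 := hasSum_exp_mulVec (t • ((q * β) • A)) v i
  have h2 := hasSum_exp_mulVec (t • (β • A)) w i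
  have hs1 : ∀ k : ℕ, ((t • ((q * β) • A)) ^ k *ᵥ v) i = (t * (q * β)) ^ k * ((A ^ k) *ᵥ v) i := by
    intro k
    rw [e1, smul_pow, Matrix.smul_mulVec]
    simp
  have hs2 : ∀ k : ℕ, ((t • (β • A)) ^ k *ᵥ w) i = (t * β) ^ k * ((A ^ k) *ᵥ w) i := by
    intro k
    rw [e2, smul_pow, Matrix.smul_mulVec]
    simp
  have hmain : (NormedSpace.exp (t • ((q * β) • A)) *ᵥ v) i ≤ (NormedSpace.exp (t • (β • A)) *ᵥ w) i := by
    refine hasSum_le ?_ h1 h2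
    intro k
    rw [hs1 k, hs2 k]
    simp only [smul_eq_mul]
    have hfac : (0:ℝ) ≤ ((Nat.factorial k : ℝ))⁻¹ := by positivity
    apply mul_le_mul_of_nonneg_left _ hfac
    have hb1 : (0:ℝ) ≤ t * (q * β) := by positivity
    have hb2 : t * (q * β) ≤ t * β := by nlinarith
    exact mul_le_mul (pow_le_pow_left₀ hb1 hb2 k) (hpowvw k i) (hpowv k i)
      (pow_nonneg (by positivity) k)
  have hnn : 0 ≤ (NormedSpace.exp (t • (β • A)) *ᵥ w) i := by
    refine hasSum_le ?_ hasSum_zero h2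
    intro k
    simp only [Pi.zero_apply, smul_eq_mul]
    rw [hs2 k]
    exact mul_nonneg (by positivity) (mul_nonneg (by positivity) (hpoww k i))
  have hexp1 : (1:ℝ) ≤ Real.exp ((p / q) * γ * t) := by
    rw [Real.one_le_exp_iff]
    positivity
  calc (NormedSpace.exp (t • ((q * β) • A)) *ᵥ v) i ≤ (NormedSpace.exp (t • (β • A)) *ᵥ w) i := hmain
    _ ≤ Real.exp ((p / q) * γ * t) * (NormedSpace.exp (t • (β • A)) *ᵥ w) i :=
        le_mul_of_one_le_left hnn hexp1
end

section
/- With B = qβA − (γ/q)I, q = 1−p, β_e = β/γ, and D = I − q²β_e A invertible, the vector B⁻¹b − log(q)·u equals (p/q)·(I − p·D⁻¹)·u, where b = [(p + q log q)βA − (p + log q)(γ/q)I]u. -/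
open Matrix

theorem Binv_b_identity (n : ℕ) (A : Matrix (Fin n) (Fin n) ℝ) (hsym : A.IsSymm)
    (β γ p q βe : ℝ) (hβ : 0 < β) (hγ : 0 < γ) (hp : p ∈ Set.Ioo (0:ℝ) 1)
    (hq : q = 1 - p) (hβe : βe = β / γ)
    (u : Fin n → ℝ) (hu : u = fun _ => 1)
    (B : Matrix (Fin n) (Fin n) ℝ)
    (hB : B = (q * β) • A - (γ / q) • (1 : Matrix (Fin n) (Fin n) ℝ))
    (hBinv : IsUnit B.det)
    (D : Matrix (Fin n) (Fin n) ℝ)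
    (hD : D = (1 : Matrix (Fin n) (Fin n) ℝ) - (q ^ 2 * βe) • A)
    (b : Fin n → ℝ)
    (hb : b = ((p + q * Real.log q) • (β • A) - ((p + Real.log q) * (γ / q)) • (1 : Matrix (Fin n) (Fin n) ℝ)) *ᵥ u) :
    B⁻¹ *ᵥ b - Real.log q • u = (p / q) • (((1 : Matrix (Fin n) (Fin n) ℝ) - p • D⁻¹) *ᵥ u) := by
  obtain ⟨hp0, hp1⟩ := hp
  have hq0 : q ≠ 0 := by rw [hq]; intro h; linarith
  have hγ0 : γ ≠ 0 := ne_of_gt hγ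
  have hpq : p = 1 - q := by rw [hq]; ring
  set l := Real.log q with hl
  -- D = -(q/γ) • B
  have hD' : D = (-(q/γ)) • B := by
    rw [hD, hB, hβe]
    match_scalars
    · field_simp
    · field_simp
  have hDinv : D⁻¹ = (-(γ/q)) • B⁻¹ := by
    apply Matrix.inv_eq_right_inv
    rw [hD', Matrix.smul_mul, Matrix.mul_smul, Matrix.mul_nonsing_inv _ hBinv, smul_smul]
    have h : -(q/γ) * -(γ/q) = 1 := by field_simp
    rw [h, one_smul]
  -- b as combination of B *ᵥ u and u
  have hM : (p + q*l) • (β • A) - ((p + l) * (γ/q)) • (1 : Matrix (Fin n) (Fin n) ℝ)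
      = ((p + q*l)/q) • B + (p^2*γ/q^2) • 1 := by
    rw [hB]
    match_scalars
    · field_simp
    · rw [hpq]; field_simp; ring
  have hbu : b = ((p + q*l)/q) • (B *ᵥ u) + (p^2*γ/q^2) • u := by
    rw [hb, hM, Matrix.add_mulVec, Matrix.smul_mulVec, Matrix.smul_mulVec,
      Matrix.one_mulVec]
  have hBBu : B⁻¹ *ᵥ (B *ᵥ u) = u := by
    rw [Matrix.mulVec_mulVec, Matrix.nonsing_inv_mul _ hBinv, Matrix.one_mulVec]
  rw [hbu, Matrix.mulVec_add, Matrix.mulVec_smul, Matrix.mulVec_smul, hBBu, hDinv]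
  rw [Matrix.sub_mulVec, Matrix.one_mulVec, Matrix.smul_mulVec, Matrix.smul_mulVec]
  set v := B⁻¹ *ᵥ u with hv
  funext i
  simp only [Pi.add_apply, Pi.sub_apply, Pi.smul_apply, smul_eq_mul, Pi.neg_apply]
  field_simp
  ring
end

section
/- The epidemic threshold condition for the worst-case scenario solution: if β/γ < 1/(q²λ₁), then every eigenvalue of B = qβA − (γ/q)I is negative, so the solution Î(t) = e^{Bt}(B⁻¹b − log q·u) − B⁻¹b converges to −B⁻¹b as t → ∞. -/
open Matrix NormedSpace Filter

theorem epidemic_threshold_decay (n : ℕ) (A : Matrix (Fin n) (Fin n) ℝ) (hsym : A.IsSymm)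
    (lam1 : ℝ) (hlam1 : 0 < lam1)
    (hspec : ∀ μ ∈ spectrum ℝ A, μ ≤ lam1)
    (q β γ : ℝ) (hq : q ∈ Set.Ioo (0:ℝ) 1) (hβ : 0 < β) (hγ : 0 < γ)
    (hthr : β / γ < 1 / (q ^ 2 * lam1))
    (u b : Fin n → ℝ) (hu : u = fun _ => 1)
    (B : Matrix (Fin n) (Fin n) ℝ)
    (hB : B = (q * β) • A - (γ / q) • (1 : Matrix (Fin n) (Fin n) ℝ)) :
    (∀ μ ∈ spectrum ℝ B, μ < 0) ∧
    Tendsto (fun t : ℝ => exp (t • B) *ᵥ (B⁻¹ *ᵥ b - Real.log q • u) - B⁻¹ *ᵥ b)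
      atTop (nhds (-(B⁻¹ *ᵥ b))) := by
  obtain ⟨hq0, hq1⟩ := hq
  have hqβ : (0:ℝ) < q * β := by positivity
  have hthr' : q ^ 2 * β * lam1 < γ := by
    have h1 : 0 < q ^ 2 * lam1 := by positivity
    rw [div_lt_div_iff₀ hγ h1] at hthr
    nlinarith
  -- Part 1: all eigenvalues negative
  have hneg : ∀ μ ∈ spectrum ℝ B, μ < 0 := by
    intro μ hμ
    have hBeq : B = (q * β) • A - algebraMap ℝ (Matrix (Fin n) (Fin n) ℝ) (γ / q) := by
      rw [hB, Algebra.algebraMap_eq_smul_one]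
    rw [hBeq, ← spectrum.sub_singleton_eq] at hμ
    have hunit : IsUnit (q * β) := isUnit_iff_ne_zero.mpr (ne_of_gt hqβ)
    rw [show ((q * β) • A) = (hunit.unit : ℝˣ) • A from rfl,
      spectrum.unit_smul_eq_smul] at hμ
    rw [Set.mem_sub] at hμ
    obtain ⟨x, hx, y, hy, rfl⟩ := hμ
    rw [Set.mem_singleton_iff] at hy
    subst hy
    rw [Set.mem_smul_set] at hx
    obtain ⟨z, hz, rfl⟩ := hx
    have hy' : z ≤ lam1 := hspec z hz
    have hcoe : (hunit.unit : ℝ) = q * β := rfl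
    rw [Units.smul_def, hcoe, smul_eq_mul]
    rw [sub_neg]
    calc q * β * z ≤ q * β * lam1 := by nlinarith
      _ < γ / q := by rw [lt_div_iff₀ hq0]; nlinarith
  refine ⟨hneg, ?_⟩
  -- Part 2: B is symmetric hence Hermitian
  have hBsym : B.IsHermitian := by
    rw [hB]
    unfold Matrix.IsHermitian
    rw [conjTranspose_sub, conjTranspose_smul, conjTranspose_smul, conjTranspose_one]
    have : Aᴴ = A := by
      ext i j
      simpa [conjTranspose_apply] using hsym.apply i j
    rw [this]; norm_num
  set U : Matrix (Fin n) (Fin n) ℝ := (hBsym.eigenvectorUnitary : Matrix (Fin n) (Fin n) ℝ)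
    with hU
  have hUunit : IsUnit U := by
    have := (Unitary.toUnits (hBsym.eigenvectorUnitary)).isUnit
    exact this
  have hUinv : U⁻¹ = star U := by
    apply Matrix.inv_eq_left_inv
    exact Unitary.coe_star_mul_self _
  have hev : ∀ i, hBsym.eigenvalues i < 0 := fun i =>
    hneg _ (hBsym.eigenvalues_mem_spectrum_real i)
  -- spectral theorem
  have hspecthm : B = U * diagonal hBsym.eigenvalues * U⁻¹ := by
    rw [hUinv]
    have := hBsym.spectral_theorem
    simpa using this
  -- exp formula
  have hexp : ∀ t : ℝ, exp (t • B) =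
      U * diagonal (fun i => Real.exp (t * hBsym.eigenvalues i)) * U⁻¹ := by
    intro t
    have h1 : t • B = U * diagonal (fun i => t * hBsym.eigenvalues i) * U⁻¹ := by
      conv_lhs => rw [hspecthm]
      rw [show (fun i => t * hBsym.eigenvalues i) = t • hBsym.eigenvalues from rfl,
        diagonal_smul, Matrix.mul_smul, Matrix.smul_mul]
    rw [h1, Matrix.exp_conj _ _ hUunit, Matrix.exp_diagonal]
    congr 1
    funext i
    simp [Pi.exp_def, Real.exp_eq_exp_ℝ]
  -- exp (t • B) → 0
  have hexp0 : Tendsto (fun t : ℝ => exp (t • B)) atTop (nhds 0) := by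
    have hdiag : Tendsto (fun t : ℝ => diagonal (fun i => Real.exp (t * hBsym.eigenvalues i)))
        atTop (nhds (diagonal (fun _ : Fin n => (0:ℝ)))) := by
      apply Tendsto.comp (continuous_id.matrix_diagonal.tendsto _)
      rw [tendsto_pi_nhds]
      intro i
      exact Real.tendsto_exp_atBot.comp (tendsto_id.atTop_mul_const_of_neg (hev i))
    have hcont : Continuous fun M : Matrix (Fin n) (Fin n) ℝ => U * M * U⁻¹ :=
      (continuous_const.matrix_mul continuous_id).matrix_mul continuous_const
    have := (hcont.tendsto _).comp hdiag
    simp only [Function.comp_def] at this ⊢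
    have heq : U * diagonal (fun _ : Fin n => (0:ℝ)) * U⁻¹ = 0 := by
      simp [Matrix.diagonal_zero]
    rw [heq] at this
    convert this using 1
    funext t
    exact hexp t
  -- combine
  have hcont2 : Continuous fun M : Matrix (Fin n) (Fin n) ℝ =>
      M *ᵥ (B⁻¹ *ᵥ b - Real.log q • u) - B⁻¹ *ᵥ b :=
    (continuous_id.matrix_mulVec continuous_const).sub continuous_const
  have := (hcont2.tendsto 0).comp hexp0
  simpa [Function.comp_def, Matrix.zero_mulVec, zero_sub] using this
end

section
/- Under the condition β_e < 1/(qλ₁) (hence also q²β_eλ₁ < 1), for each node i, the worst-case susceptibility ŝᵢ(t) = q·exp(−Σ_ν ζ_ν(i)·α_ν·(e^{−(γ/q)(1−q²β_eλ_ν)t} − 1)), where α_ν = (p − p q β_e λ_ν)/(1 − q²β_e λ_ν) and ζ_ν(i) = ψ_ν(i)·Σⱼ ψ_ν(j), is asymptotically equivalent as t → ∞ to the Gompertz function s̃ᵢ(t) = Pᵢ·exp(−Qᵢ·e^{−Rt}) with Pᵢ = q·exp(Σ_ν α_ν ζ_ν(i)), Qᵢ = α₁ζ₁(i), R = (γ/q)(1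 − q²β_eλ₁); that is, ŝᵢ(t)/s̃ᵢ(t) → 1 as t → ∞ provided λ₁ is a simple eigenvalue strictly larger than all other eigenvalues. -/
open Matrix Filter Finset

lemma exp_neg_mul_tendsto_aux {c : ℝ} (hc : 0 < c) :
    Tendsto (fun t => Real.exp (-c * t)) atTop (nhds 0) := by
  have h1 : Tendsto (fun t : ℝ => c * t) atTop atTop :=
    Tendsto.const_mul_atTop hc tendsto_id
  have h2 : Tendsto (fun t : ℝ => -(c * t)) atTop atBot :=
    tendsto_neg_atTop_atBot.comp h1
  have h3 : Tendsto (fun t : ℝ => Real.exp (-(c * t))) atTop (nhds 0) :=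
    Real.tendsto_exp_atBot.comp h2
  simpa [neg_mul] using h3

theorem worst_case_susceptibility_gompertz_asymptotics
    (n : ℕ) (hn : 2 ≤ n) (G : SimpleGraph (Fin n)) [DecidableRel G.Adj]
    (hconn : G.Connected)
    (A : Matrix (Fin n) (Fin n) ℝ) (hA : A = G.adjMatrix ℝ)
    (ν₁ : Fin n) (lam : Fin n → ℝ) (ψ : Fin n → Fin n → ℝ)
    (heig : ∀ ν, A *ᵥ ψ ν = lam ν • ψ ν)
    (horth : ∀ ν μ, ∑ i, ψ ν i * ψ μ i = if ν = μ then 1 else 0)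
    (hdom : ∀ ν : Fin n, ν ≠ ν₁ → lam ν < lam ν₁)
    (p q β γ βe : ℝ) (hp : p ∈ Set.Ioo (0:ℝ) 1) (hq : q = 1 - p)
    (hβ : 0 < β) (hγ : 0 < γ) (hβe : βe = β / γ)
    (hthr : βe < 1 / (q * lam ν₁))
    (α : Fin n → ℝ) (hα : ∀ ν, α ν = (p - p * q * βe * lam ν) / (1 - q ^ 2 * βe * lam ν))
    (ζ : Fin n → Fin n → ℝ) (hζ : ∀ ν i, ζ ν i = ψ ν i * ∑ j, ψ ν j)
    (shat : Fin n → ℝ → ℝ)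
    (hshat : ∀ i t, shat i t =
      q * Real.exp (-(∑ ν, ζ ν i * α ν *
        (Real.exp (-(γ / q) * (1 - q ^ 2 * βe * lam ν) * t) - 1))))
    (P Q : Fin n → ℝ) (R : ℝ)
    (hP : ∀ i, P i = q * Real.exp (∑ ν, α ν * ζ ν i))
    (hQ : ∀ i, Q i = α ν₁ * ζ ν₁ i)
    (hR : R = (γ / q) * (1 - q ^ 2 * βe * lam ν₁))
    (stilde : Fin n → ℝ → ℝ)
    (hstilde : ∀ i t, stilde i t = P i * Real.exp (-(Q i) * Real.exp (-R * t))) :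
    ∀ i, Tendsto (fun t => shat i t / stilde i t) atTop (nhds 1) := by
  have hq0 : 0 < q := by rw [hq]; linarith [hp.2]
  have hq1 : q < 1 := by rw [hq]; linarith [hp.1]
  have hqne : q ≠ 0 := ne_of_gt hq0
  have hβe0 : 0 < βe := by rw [hβe]; exact div_pos hβ hγ
  have hlamq : 0 < q * lam ν₁ := by
    by_contra h
    push_neg at h
    have : 1 / (q * lam ν₁) ≤ 0 := one_div_nonpos.mpr h
    linarith
  have hprod : βe * (q * lam ν₁) < 1 := (lt_div_iff₀ hlamq).mp hthr
  have hc : ∀ ν, 0 < 1 - q ^ 2 * βe * lam ν := by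
    intro ν
    have hle : lam ν ≤ lam ν₁ := by
      by_cases hν : ν = ν₁
      · rw [hν]
      · exact le_of_lt (hdom ν hν)
    have h1 : q ^ 2 * βe * lam ν ≤ q ^ 2 * βe * lam ν₁ :=
      mul_le_mul_of_nonneg_left hle (by positivity)
    have h2 : q * (βe * (q * lam ν₁)) < q * 1 := mul_lt_mul_of_pos_left hprod hq0
    nlinarith
  have hcpos : ∀ ν, 0 < (γ / q) * (1 - q ^ 2 * βe * lam ν) := by
    intro ν
    exact mul_pos (div_pos hγ hq0) (hc ν)
  intro i
  -- rewrite the ratio as a single exponential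
  have key : ∀ t, shat i t / stilde i t =
      Real.exp (α ν₁ * ζ ν₁ i * Real.exp (-R * t)
        - ∑ ν, ζ ν i * α ν * Real.exp (-(γ / q) * (1 - q ^ 2 * βe * lam ν) * t)) := by
    intro t
    rw [hshat, hstilde, hP, hQ]
    set a : ℝ := -(∑ ν, ζ ν i * α ν *
        (Real.exp (-(γ / q) * (1 - q ^ 2 * βe * lam ν) * t) - 1)) with ha
    set b : ℝ := ∑ ν, α ν * ζ ν i with hb
    set c : ℝ := -(α ν₁ * ζ ν₁ i) * Real.exp (-R * t) with hcc
    have hstep : q * Real.exp a / (q * Real.exp b * Real.exp c)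
        = Real.exp (a - (b + c)) := by
      rw [mul_assoc, mul_div_mul_left _ _ hqne, ← Real.exp_add, ← Real.exp_sub]
    rw [hstep]
    congr 1
    have hsum : ∑ ν, ζ ν i * α ν *
        (Real.exp (-(γ / q) * (1 - q ^ 2 * βe * lam ν) * t) - 1)
        = (∑ ν, ζ ν i * α ν * Real.exp (-(γ / q) * (1 - q ^ 2 * βe * lam ν) * t))
          - ∑ ν, α ν * ζ ν i := by
      rw [← Finset.sum_sub_distrib]
      exact Finset.sum_congr rfl fun ν _ => by ring
    rw [ha, hb, hcc, hsum]
    ring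
  -- the exponent tends to 0
  have hg : Tendsto (fun t => α ν₁ * ζ ν₁ i * Real.exp (-R * t)
      - ∑ ν, ζ ν i * α ν * Real.exp (-(γ / q) * (1 - q ^ 2 * βe * lam ν) * t))
      atTop (nhds 0) := by
    have h1 : Tendsto (fun t => α ν₁ * ζ ν₁ i * Real.exp (-R * t)) atTop (nhds 0) := by
      have := (exp_neg_mul_tendsto_aux (c := R) (by rw [hR]; exact hcpos ν₁)).const_mul
        (α ν₁ * ζ ν₁ i)
      simpa using this
    have h2 : Tendsto (fun t => ∑ ν, ζ ν i * α ν *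
        Real.exp (-(γ / q) * (1 - q ^ 2 * βe * lam ν) * t)) atTop (nhds 0) := by
      have := tendsto_finset_sum (Finset.univ : Finset (Fin n))
        (fun ν _ => ((exp_neg_mul_tendsto_aux (hcpos ν)).const_mul (ζ ν i * α ν)))
      simpa using this
    simpa using h1.sub h2
  have := (Real.continuous_exp.tendsto 0).comp hg
  rw [Real.exp_zero] at this
  refine Tendsto.congr (fun t => ?_) this
  simp [Function.comp, key t]
end

section
/- In the supercritical case β_e > 1/(q²λ₁) (so 1 − q²β_eλ₁ < 0), with λ₁ simple and dominant, the worst-case susceptibility ŝᵢ(t) = q·exp(−Σ_ν ζ_ν(i)·α_ν·(e^{−(γ/q)(1−q²β_eλ_ν)t} − 1)) tends to 0 as t → ∞ for every node i, provided ζ₁(i) > 0 and α₁ > 0. -/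
open Matrix Filter Finset

theorem supercritical_susceptibility_to_zero
    (n : ℕ) (hn : 2 ≤ n) (G : SimpleGraph (Fin n)) [DecidableRel G.Adj]
    (hconn : G.Connected)
    (A : Matrix (Fin n) (Fin n) ℝ) (hA : A = G.adjMatrix ℝ)
    (ν₁ : Fin n) (lam : Fin n → ℝ) (ψ : Fin n → Fin n → ℝ)
    (heig : ∀ ν, A *ᵥ ψ ν = lam ν • ψ ν)
    (horth : ∀ ν μ, ∑ i, ψ ν i * ψ μ i = if ν = μ then 1 else 0)
    (hdom : ∀ ν : Fin n, ν ≠ ν₁ → lam ν < lam ν₁)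
    (p q β γ βe : ℝ) (hp : p ∈ Set.Ioo (0:ℝ) 1) (hq : q = 1 - p)
    (hβ : 0 < β) (hγ : 0 < γ) (hβe : βe = β / γ)
    (hsuper : 1 < q ^ 2 * βe * lam ν₁)
    (α : Fin n → ℝ) (hα : ∀ ν, α ν = (p - p * q * βe * lam ν) / (1 - q ^ 2 * βe * lam ν))
    (ζ : Fin n → Fin n → ℝ) (hζ : ∀ ν i, ζ ν i = ψ ν i * ∑ j, ψ ν j)
    (hα1 : 0 < α ν₁)
    (shat : Fin n → ℝ → ℝ)
    (hshat : ∀ i t, shat i t =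
      q * Real.exp (-(∑ ν, ζ ν i * α ν *
        (Real.exp (-(γ / q) * (1 - q ^ 2 * βe * lam ν) * t) - 1)))) :
    ∀ i, 0 < ζ ν₁ i → Tendsto (fun t => shat i t) atTop (nhds 0) := by
  intro i hi
  have hq0 : 0 < q := by rw [hq]; linarith [hp.2]
  have hβe0 : 0 < βe := by rw [hβe]; positivity
  set c : Fin n → ℝ := fun ν => -(γ / q) * (1 - q ^ 2 * βe * lam ν) with hc
  have hgq : 0 < γ / q := by positivity
  have hc1 : 0 < c ν₁ := by
    simp only [hc]
    nlinarith
  have hclt : ∀ ν, ν ≠ ν₁ → c ν < c ν₁ := by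
    intro ν hν
    have h1 := hdom ν hν
    have hK : 0 < γ / q * (q ^ 2 * βe) :=
      mul_pos hgq (mul_pos (pow_pos hq0 2) hβe0)
    simp only [hc]
    nlinarith
  set S : ℝ → ℝ := fun t => ∑ ν, ζ ν i * α ν * (Real.exp (c ν * t) - 1) with hS
  -- the normalized sum tends to ζ ν₁ i * α ν₁
  have hlim : Tendsto (fun t => S t * Real.exp (-(c ν₁) * t)) atTop
      (nhds (ζ ν₁ i * α ν₁)) := by
    have key : ∀ t, S t * Real.exp (-(c ν₁) * t)
        = ∑ ν, ζ ν i * α ν * (Real.exp ((c ν - c ν₁) * t) - Real.exp (-(c ν₁) * t)) := by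
      intro t
      rw [hS, Finset.sum_mul]
      refine Finset.sum_congr rfl fun ν _ => ?_
      rw [mul_assoc, sub_mul, ← Real.exp_add, one_mul]
      ring_nf
    simp only [key]
    have hsum : (ζ ν₁ i * α ν₁) = ∑ ν, (if ν = ν₁ then ζ ν₁ i * α ν₁ else 0) := by
      rw [Finset.sum_ite_eq' Finset.univ ν₁ (fun _ => ζ ν₁ i * α ν₁)]
      simp
    rw [hsum]
    refine tendsto_finset_sum _ fun ν _ => ?_
    by_cases hν : ν = ν₁
    · subst hν
      simp only [if_pos rfl, sub_self, zero_mul]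
      have h1 : Tendsto (fun t : ℝ => Real.exp ((0:ℝ) * t)) atTop (nhds 1) := by
        simp [Real.exp_zero]
      have h2 : Tendsto (fun t : ℝ => Real.exp (-(c ν) * t)) atTop (nhds 0) := by
        refine Real.tendsto_exp_atBot.comp ?_
        exact Tendsto.const_mul_atTop_of_neg (neg_neg_iff_pos.mpr hc1) tendsto_id
      have := ((h1.sub h2).const_mul (ζ ν i * α ν))
      simpa using this
    · simp only [if_neg hν]
      have h1 : Tendsto (fun t : ℝ => Real.exp ((c ν - c ν₁) * t)) atTop (nhds 0) := by
        refine Real.tendsto_exp_atBot.comp ?_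
        exact Tendsto.const_mul_atTop_of_neg (by linarith [hclt ν hν]) tendsto_id
      have h2 : Tendsto (fun t : ℝ => Real.exp (-(c ν₁) * t)) atTop (nhds 0) := by
        refine Real.tendsto_exp_atBot.comp ?_
        exact Tendsto.const_mul_atTop_of_neg (neg_neg_iff_pos.mpr hc1) tendsto_id
      have := ((h1.sub h2).const_mul (ζ ν i * α ν))
      simpa using this
  have hStop : Tendsto S atTop atTop := by
    have hexp : Tendsto (fun t : ℝ => Real.exp (c ν₁ * t)) atTop atTop := by
      refine Real.tendsto_exp_atTop.comp ?_
      exact Tendsto.const_mul_atTop hc1 tendsto_id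
    have heq : ∀ t, S t = (S t * Real.exp (-(c ν₁) * t)) * Real.exp (c ν₁ * t) := by
      intro t
      rw [mul_assoc, ← Real.exp_add]
      simp
    have := Tendsto.pos_mul_atTop (mul_pos hi hα1) hlim hexp
    exact this.congr fun t => (heq t).symm
  have hexp0 : Tendsto (fun t => Real.exp (-(S t))) atTop (nhds 0) := by
    refine Real.tendsto_exp_atBot.comp ?_
    exact tendsto_neg_atTop_atBot.comp hStop
  have : Tendsto (fun t => q * Real.exp (-(S t))) atTop (nhds (q * 0)) :=
    hexp0.const_mul q
  rw [mul_zero] at this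
  refine this.congr fun t => ?_
  rw [hshat]
end
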